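/- Assume m ≥ 2, |y_j| ≤ C_y and ‖φ_j‖ ≤ κ for all 1 ≤ j ≤ n, and set C = 2·(C_y + κ·(C_y²/λ)^{1/m}). Then the minimizers on the full and leave-one-out data satisfy the distance bound ‖f_Z − f_{Z^i}‖ ≤ (2^{m−2}·C·κ/(λ·n))^{1/(m−1)}. -/

import Mathlib

open scoped RealInnerProductSpace BigOperators NNReal

private lemma aux_add_rpow {p s t : ℝ} (hp : 1 ≤ p) (hs : 0 ≤ s) (ht : 0 ≤ t) :
    s ^ p + t ^ p ≤ (s + t) ^ p := by
  have := NNReal.add_rpow_le_rpow_add (s.toNNReal) (t.toNNReal) hp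
  have h2 : ((s.toNNReal ^ p + t.toNNReal ^ p : ℝ≥0) : ℝ)
      ≤ (((s.toNNReal + t.toNNReal : ℝ≥0)) ^ p : ℝ≥0) := NNReal.coe_le_coe.2 this
  push_cast at h2
  rwa [Real.coe_toNNReal _ hs, Real.coe_toNNReal _ ht] at h2

private lemma aux_mid_rpow {p u v : ℝ} (hp : 1 ≤ p) (hu : 0 ≤ u) (hv : 0 ≤ v) :
    ((u + v) / 2) ^ p ≤ (u ^ p + v ^ p) / 2 := by
  have h := (convexOn_rpow hp).2 (Set.mem_Ici.2 hu) (Set.mem_Ici.2 hv)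
    (by norm_num : (0:ℝ) ≤ 1/2) (by norm_num : (0:ℝ) ≤ 1/2) (by norm_num)
  simp only [smul_eq_mul] at h
  calc ((u + v) / 2) ^ p = (1/2 * u + 1/2 * v) ^ p := by ring_nf
    _ ≤ 1/2 * u ^ p + 1/2 * v ^ p := h
    _ = (u ^ p + v ^ p) / 2 := by ring

private lemma aux_sq_mid (u v : ℝ) : ((u + v) / 2) ^ 2 ≤ (u ^ 2 + v ^ 2) / 2 := by
  nlinarith [sq_nonneg (u - v)]

/-- Clarkson-type inequality in a real inner product space, for `m ≥ 2`. -/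
private lemma aux_clarkson {H : Type*} [NormedAddCommGroup H] [InnerProductSpace ℝ H]
    {m : ℝ} (hm : 2 ≤ m) (a b : H) :
    ‖(1/2 : ℝ) • (a + b)‖ ^ m + ‖(1/2 : ℝ) • (a - b)‖ ^ m ≤ (‖a‖ ^ m + ‖b‖ ^ m) / 2 := by
  set p := m / 2 with hp_def
  have hp : 1 ≤ p := by rw [hp_def]; linarith
  have key : ∀ x : H, ‖x‖ ^ m = (‖x‖ ^ (2 : ℕ)) ^ p := by
    intro x
    rw [← Real.rpow_natCast ‖x‖ 2, ← Real.rpow_mul (norm_nonneg x)]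
    norm_num [hp_def]
    ring_nf
  have hs : ‖(1/2 : ℝ) • (a + b)‖ = ‖a + b‖ / 2 := by
    rw [norm_smul]; simp [norm_div]; ring
  have ht : ‖(1/2 : ℝ) • (a - b)‖ = ‖a - b‖ / 2 := by
    rw [norm_smul]; simp [norm_div]; ring
  have hpar : ‖a + b‖ ^ (2:ℕ) + ‖a - b‖ ^ (2:ℕ) = 2 * (‖a‖ ^ (2:ℕ) + ‖b‖ ^ (2:ℕ)) := by
    have := parallelogram_law_with_norm ℝ a b
    simpa [sq] using this
  have hsum : ‖(1/2 : ℝ) • (a + b)‖ ^ (2:ℕ) + ‖(1/2 : ℝ) • (a - b)‖ ^ (2:ℕ)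
      = (‖a‖ ^ (2:ℕ) + ‖b‖ ^ (2:ℕ)) / 2 := by
    rw [hs, ht]; rw [div_pow, div_pow]; rw [eq_div_iff (by norm_num : (2:ℝ) ≠ 0)]
    nlinarith [hpar]
  calc ‖(1/2 : ℝ) • (a + b)‖ ^ m + ‖(1/2 : ℝ) • (a - b)‖ ^ m
      = (‖(1/2 : ℝ) • (a + b)‖ ^ (2:ℕ)) ^ p + (‖(1/2 : ℝ) • (a - b)‖ ^ (2:ℕ)) ^ p := by
        rw [key, key]
    _ ≤ (‖(1/2 : ℝ) • (a + b)‖ ^ (2:ℕ) + ‖(1/2 : ℝ) • (a - b)‖ ^ (2:ℕ)) ^ p :=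
        aux_add_rpow hp (by positivity) (by positivity)
    _ = ((‖a‖ ^ (2:ℕ) + ‖b‖ ^ (2:ℕ)) / 2) ^ p := by rw [hsum]
    _ ≤ ((‖a‖ ^ (2:ℕ)) ^ p + (‖b‖ ^ (2:ℕ)) ^ p) / 2 :=
        aux_mid_rpow hp (by positivity) (by positivity)
    _ = (‖a‖ ^ m + ‖b‖ ^ m) / 2 := by rw [key a, key b]

/-- With `m ≥ 2`, `|y j| ≤ C_y`, `‖φ j‖ ≤ κ`, and `C = 2·(C_y + κ·(C_y²/λ)^{1/m})`,
the minimizers on the full data and on the leave-one-out data satisfy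
`‖fZ − fZi‖ ≤ (2^{m−2}·C·κ/(λ·n))^{1/(m−1)}`. -/
theorem mPower_RLSR_minimizer_distance_bound
    {H : Type*} [NormedAddCommGroup H] [InnerProductSpace ℝ H] [CompleteSpace H]
    (n : ℕ) (hn : 0 < n) (φ : Fin n → H) (y : Fin n → ℝ)
    (lam m Cy κ : ℝ) (hlam : 0 < lam) (hm : 2 ≤ m) (hCy : 0 < Cy) (hκ : 0 < κ)
    (hy : ∀ j, |y j| ≤ Cy) (hφ : ∀ j, ‖φ j‖ ≤ κ)
    (i : Fin n) (fZ fZi : H)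
    (hfZ : ∀ g : H,
      (1 / (n : ℝ)) * ∑ j, (y j - ⟪φ j, fZ⟫) ^ 2 + lam * ‖fZ‖ ^ m ≤
      (1 / (n : ℝ)) * ∑ j, (y j - ⟪φ j, g⟫) ^ 2 + lam * ‖g‖ ^ m)
    (hfZi : ∀ g : H,
      (1 / (n : ℝ)) * ∑ j ∈ Finset.univ.erase i, (y j - ⟪φ j, fZi⟫) ^ 2 + lam * ‖fZi‖ ^ m ≤
      (1 / (n : ℝ)) * ∑ j ∈ Finset.univ.erase i, (y j - ⟪φ j, g⟫) ^ 2 + lam * ‖g‖ ^ m)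
    (C : ℝ) (hC : C = 2 * (Cy + κ * (Cy ^ 2 / lam) ^ (1 / m))) :
    ‖fZ - fZi‖ ≤ ((2 : ℝ) ^ (m - 2) * C * κ / (lam * n)) ^ (1 / (m - 1)) := by
  have hm0 : m ≠ 0 := by linarith
  have hnR : (0:ℝ) < (n : ℝ) := Nat.cast_pos.2 hn
  have hν : (0:ℝ) < 1 / (n:ℝ) := by positivity
  set R : ℝ := (Cy ^ 2 / lam) ^ (1 / m) with hR_def
  have hR0 : 0 < R := Real.rpow_pos_of_pos (by positivity) _
  have hC0 : 0 < C := by rw [hC]; positivity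
  -- norm bound for fZ
  have hyb : ∀ j, (y j) ^ 2 ≤ Cy ^ 2 := fun j => by
    rw [← sq_abs]; exact pow_le_pow_left₀ (abs_nonneg _) (hy j) 2
  have hsumy : ∑ j, (y j) ^ 2 ≤ (n : ℝ) * Cy ^ 2 := by
    calc ∑ j, (y j) ^ 2 ≤ ∑ _j : Fin n, Cy ^ 2 := Finset.sum_le_sum fun j _ => hyb j
      _ = (n : ℝ) * Cy ^ 2 := by simp [mul_comm]
  have hnormpow : ∀ g : H, lam * ‖g‖ ^ m ≤ Cy ^ 2 → ‖g‖ ≤ R := by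
    intro g hg
    have h1 : ‖g‖ ^ m ≤ Cy ^ 2 / lam := by
      rw [le_div_iff₀ hlam]; linarith [hg]
    have h2 := Real.rpow_le_rpow (Real.rpow_nonneg (norm_nonneg g) m) h1
      (by positivity : (0:ℝ) ≤ 1 / m)
    rwa [← Real.rpow_mul (norm_nonneg g), mul_one_div_cancel hm0, Real.rpow_one] at h2
  have hfZ_norm : ‖fZ‖ ≤ R := by
    apply hnormpow
    have h0 := hfZ 0
    simp only [inner_zero_right, norm_zero, Real.zero_rpow hm0, mul_zero, add_zero,
      sub_zero] at h0
    have hls : 0 ≤ (1 / (n : ℝ)) * ∑ j, (y j - ⟪φ j, fZ⟫) ^ 2 := by positivity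
    have : (1 / (n : ℝ)) * ∑ j, (y j) ^ 2 ≤ Cy ^ 2 := by
      rw [div_mul_eq_mul_div, one_mul, div_le_iff₀ hnR]
      calc ∑ j, (y j) ^ 2 ≤ (n : ℝ) * Cy ^ 2 := hsumy
        _ = Cy ^ 2 * (n : ℝ) := by ring
    linarith
  have hfZi_norm : ‖fZi‖ ≤ R := by
    apply hnormpow
    have h0 := hfZi 0
    simp only [inner_zero_right, norm_zero, Real.zero_rpow hm0, mul_zero, add_zero,
      sub_zero] at h0
    have hls : 0 ≤ (1 / (n : ℝ)) * ∑ j ∈ Finset.univ.erase i, (y j - ⟪φ j, fZi⟫) ^ 2 := by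
      positivity
    have hsub : ∑ j ∈ Finset.univ.erase i, (y j) ^ 2 ≤ ∑ j, (y j) ^ 2 :=
      Finset.sum_le_sum_of_subset_of_nonneg (Finset.erase_subset _ _)
        (fun j _ _ => by positivity)
    have : (1 / (n : ℝ)) * ∑ j ∈ Finset.univ.erase i, (y j) ^ 2 ≤ Cy ^ 2 := by
      rw [div_mul_eq_mul_div, one_mul, div_le_iff₀ hnR]
      calc ∑ j ∈ Finset.univ.erase i, (y j) ^ 2 ≤ ∑ j, (y j) ^ 2 := hsub
        _ ≤ (n : ℝ) * Cy ^ 2 := hsumy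
        _ = Cy ^ 2 * (n : ℝ) := by ring
    linarith
  -- the midpoint
  set h : H := (1/2 : ℝ) • (fZ + fZi) with hh_def
  set d : H := fZ - fZi with hd_def
  set a : Fin n → ℝ := fun j => y j - ⟪φ j, fZ⟫ with ha_def
  set b : Fin n → ℝ := fun j => y j - ⟪φ j, fZi⟫ with hb_def
  have hinner : ∀ j, y j - ⟪φ j, h⟫ = (a j + b j) / 2 := by
    intro j
    rw [hh_def, real_inner_smul_right, inner_add_right, ha_def, hb_def]
    ring
  set D : ℝ := ‖(1/2 : ℝ) • d‖ ^ m with hD_def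
  -- combine the two optimality conditions
  have h1 := hfZ h
  have h2 := hfZi h
  have h3 : ∑ j, (y j - ⟪φ j, h⟫) ^ 2 ≤ (∑ j, a j ^ 2 + ∑ j, b j ^ 2) / 2 := by
    rw [← Finset.sum_add_distrib, Finset.sum_div]
    refine Finset.sum_le_sum fun j _ => ?_
    rw [hinner j]
    exact aux_sq_mid (a j) (b j)
  have h4 : ∑ j ∈ Finset.univ.erase i, (y j - ⟪φ j, h⟫) ^ 2
      ≤ (∑ j ∈ Finset.univ.erase i, a j ^ 2 + ∑ j ∈ Finset.univ.erase i, b j ^ 2) / 2 := by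
    rw [← Finset.sum_add_distrib, Finset.sum_div]
    refine Finset.sum_le_sum fun j _ => ?_
    rw [hinner j]
    exact aux_sq_mid (a j) (b j)
  have h5 : ‖h‖ ^ m + D ≤ (‖fZ‖ ^ m + ‖fZi‖ ^ m) / 2 := by
    rw [hh_def, hD_def, hd_def]
    exact aux_clarkson hm fZ fZi
  have h6 : ∑ j, a j ^ 2 = a i ^ 2 + ∑ j ∈ Finset.univ.erase i, a j ^ 2 :=
    (Finset.add_sum_erase _ _ (Finset.mem_univ i)).symm
  have h7 : ∑ j, b j ^ 2 = b i ^ 2 + ∑ j ∈ Finset.univ.erase i, b j ^ 2 :=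
    (Finset.add_sum_erase _ _ (Finset.mem_univ i)).symm
  -- scaled versions for linarith
  have h3' : (1 / (n:ℝ)) * ∑ j, (y j - ⟪φ j, h⟫) ^ 2
      ≤ (1 / (n:ℝ)) * ((∑ j, a j ^ 2 + ∑ j, b j ^ 2) / 2) :=
    mul_le_mul_of_nonneg_left h3 hν.le
  have h4' : (1 / (n:ℝ)) * ∑ j ∈ Finset.univ.erase i, (y j - ⟪φ j, h⟫) ^ 2
      ≤ (1 / (n:ℝ)) * ((∑ j ∈ Finset.univ.erase i, a j ^ 2
          + ∑ j ∈ Finset.univ.erase i, b j ^ 2) / 2) :=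
    mul_le_mul_of_nonneg_left h4 hν.le
  have h5' : lam * (‖h‖ ^ m + D) ≤ lam * ((‖fZ‖ ^ m + ‖fZi‖ ^ m) / 2) :=
    mul_le_mul_of_nonneg_left h5 hlam.le
  have h6' : (1 / (n:ℝ)) * ∑ j, a j ^ 2
      = (1 / (n:ℝ)) * a i ^ 2 + (1 / (n:ℝ)) * ∑ j ∈ Finset.univ.erase i, a j ^ 2 := by
    rw [h6]; ring
  have h7' : (1 / (n:ℝ)) * ∑ j, b j ^ 2
      = (1 / (n:ℝ)) * b i ^ 2 + (1 / (n:ℝ)) * ∑ j ∈ Finset.univ.erase i, b j ^ 2 := by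
    rw [h7]; ring
  have key : 2 * lam * D ≤ (1 / (n:ℝ)) / 2 * (b i ^ 2 - a i ^ 2) := by
    have e1 : (1 / (n:ℝ)) * ((∑ j, a j ^ 2 + ∑ j, b j ^ 2) / 2)
        = ((1 / (n:ℝ)) * ∑ j, a j ^ 2 + (1 / (n:ℝ)) * ∑ j, b j ^ 2) / 2 := by ring
    have e2 : (1 / (n:ℝ)) * ((∑ j ∈ Finset.univ.erase i, a j ^ 2
          + ∑ j ∈ Finset.univ.erase i, b j ^ 2) / 2)
        = ((1 / (n:ℝ)) * ∑ j ∈ Finset.univ.erase i, a j ^ 2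
          + (1 / (n:ℝ)) * ∑ j ∈ Finset.univ.erase i, b j ^ 2) / 2 := by ring
    rw [e1] at h3'; rw [e2] at h4'
    have e3 : lam * (‖h‖ ^ m + D) = lam * ‖h‖ ^ m + lam * D := by ring
    have e4 : lam * ((‖fZ‖ ^ m + ‖fZi‖ ^ m) / 2)
        = (lam * ‖fZ‖ ^ m + lam * ‖fZi‖ ^ m) / 2 := by ring
    rw [e3, e4] at h5'
    linarith [h1, h2, h3', h4', h5', h6', h7']
  -- bound the difference of squared residuals
  have hdiff : b i ^ 2 - a i ^ 2 ≤ C * (κ * ‖d‖) := by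
    have hfac : b i ^ 2 - a i ^ 2 = ⟪φ i, d⟫ * (a i + b i) := by
      rw [ha_def, hb_def, hd_def, inner_sub_right]
      ring
    have hip : |⟪φ i, d⟫| ≤ κ * ‖d‖ := by
      calc |⟪φ i, d⟫| ≤ ‖φ i‖ * ‖d‖ := abs_real_inner_le_norm _ _
        _ ≤ κ * ‖d‖ := mul_le_mul_of_nonneg_right (hφ i) (norm_nonneg d)
    have hai : |a i| ≤ Cy + κ * R := by
      rw [ha_def]
      calc |y i - ⟪φ i, fZ⟫| ≤ |y i| + |⟪φ i, fZ⟫| := abs_sub _ _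
        _ ≤ Cy + κ * R := by
            refine add_le_add (hy i) ?_
            calc |⟪φ i, fZ⟫| ≤ ‖φ i‖ * ‖fZ‖ := abs_real_inner_le_norm _ _
              _ ≤ κ * R := mul_le_mul (hφ i) hfZ_norm (norm_nonneg _) hκ.le
    have hbi : |b i| ≤ Cy + κ * R := by
      rw [hb_def]
      calc |y i - ⟪φ i, fZi⟫| ≤ |y i| + |⟪φ i, fZi⟫| := abs_sub _ _
        _ ≤ Cy + κ * R := by
            refine add_le_add (hy i) ?_
            calc |⟪φ i, fZi⟫| ≤ ‖φ i‖ * ‖fZi‖ := abs_real_inner_le_norm _ _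
              _ ≤ κ * R := mul_le_mul (hφ i) hfZi_norm (norm_nonneg _) hκ.le
    have habi : |a i + b i| ≤ C := by
      rw [hC]
      calc |a i + b i| ≤ |a i| + |b i| := abs_add_le _ _
        _ ≤ 2 * (Cy + κ * R) := by linarith
    calc b i ^ 2 - a i ^ 2 = ⟪φ i, d⟫ * (a i + b i) := hfac
      _ ≤ |⟪φ i, d⟫ * (a i + b i)| := le_abs_self _
      _ = |⟪φ i, d⟫| * |a i + b i| := abs_mul _ _
      _ ≤ (κ * ‖d‖) * C := mul_le_mul hip habi (abs_nonneg _) (by positivity)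
      _ = C * (κ * ‖d‖) := by ring
  have key2 : 2 * lam * D ≤ (1 / (n:ℝ)) / 2 * (C * (κ * ‖d‖)) :=
    le_trans key (mul_le_mul_of_nonneg_left hdiff (by positivity))
  -- rewrite D
  have hDval : D = ‖d‖ ^ m / (2:ℝ) ^ m := by
    rw [hD_def]
    have : ‖(1/2 : ℝ) • d‖ = ‖d‖ / 2 := by rw [norm_smul]; simp [norm_div]; ring
    rw [this, Real.div_rpow (norm_nonneg d) (by norm_num : (0:ℝ) ≤ 2)]
  have h2m2 : (2:ℝ) ^ (m - 2) = (2:ℝ) ^ m / 4 := by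
    rw [Real.rpow_sub (by norm_num : (0:ℝ) < 2)]
    congr 1
    rw [show ((2:ℝ) : ℝ) = ((2:ℕ) : ℝ) by norm_num, Real.rpow_natCast]
    norm_num
  have h2mpos : (0:ℝ) < (2:ℝ) ^ m := Real.rpow_pos_of_pos (by norm_num) m
  -- derive ‖d‖^m * (lam * n) ≤ 2^(m-2) * C * κ * ‖d‖
  have hKd : ‖d‖ ^ m * (lam * (n:ℝ)) ≤ (2:ℝ) ^ (m - 2) * C * κ * ‖d‖ := by
    have e1 : ‖d‖ ^ m * (lam * (n:ℝ))
        = (2 * lam * D) * ((n:ℝ) * (2:ℝ) ^ m / 2) := by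
      rw [hDval]; field_simp
    have e2 : (2:ℝ) ^ (m - 2) * C * κ * ‖d‖
        = ((1 / (n:ℝ)) / 2 * (C * (κ * ‖d‖))) * ((n:ℝ) * (2:ℝ) ^ m / 2) := by
      rw [h2m2]; field_simp; ring
    rw [e1, e2]
    exact mul_le_mul_of_nonneg_right key2 (by positivity)
  -- conclude
  rcases eq_or_lt_of_le (norm_nonneg d) with hd0 | hd0
  · rw [hd_def] at hd0
    rw [← hd0]
    exact Real.rpow_nonneg (by positivity) _
  · have hm1 : (0:ℝ) < m - 1 := by linarith
    have hstep : ‖d‖ ^ (m - 1) ≤ (2:ℝ) ^ (m - 2) * C * κ / (lam * (n:ℝ)) := by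
      rw [Real.rpow_sub hd0, Real.rpow_one, div_le_div_iff₀ hd0 (by positivity)]
      linarith [hKd]
    have hfinal := Real.rpow_le_rpow (Real.rpow_nonneg (norm_nonneg d) _) hstep
      (by positivity : (0:ℝ) ≤ 1 / (m - 1))
    rwa [← Real.rpow_mul (norm_nonneg d), mul_one_div_cancel (ne_of_gt hm1),
      Real.rpow_one] at hfinal
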